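/- Let U₁ : D₁ ⥤ C and U₂ : D₂ ⥤ C be monadic right adjoints, with chosen adjunctions L₁ ⊣ U₁ and L₂ ⊣ U₂, and let t : D₁ ⥤ D₂ be a functor together with a natural isomorphism α : U₁ ≅ t ⋙ U₂. Let β : L₂ ⟶ L₁ ⋙ t be the natural transformation whose component at an object X of C is the adjunct, under L₂ ⊣ U₂, of the composite X ⟶ U₁(L₁ X) ⟶ U₂(t(L₁ X)) of the unit of L₁ ⊣ U₁ with α at L₁ X. Then t is an equivalence of categories if and only if β is a natural isomorphism. -/

import Mathlib

open CategoryTheory Category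

namespace Stmt6Aux

variable {C D₁ D₂ : Type*} [Category C] [Category D₁] [Category D₂]
    {U₁ : D₁ ⥤ C} {U₂ : D₂ ⥤ C} {L₁ : C ⥤ D₁} {L₂ : C ⥤ D₂}
    (adj₁ : L₁ ⊣ U₁) (adj₂ : L₂ ⊣ U₂) (t : D₁ ⥤ D₂) (α : U₁ ≅ t ⋙ U₂)

/-- The mate `β : L₂ ⟶ L₁ ⋙ t`. -/
def β : L₂ ⟶ L₁ ⋙ t where
  app X := (adj₂.homEquiv X (t.obj (L₁.obj X))).symm
      (adj₁.unit.app X ≫ α.hom.app (L₁.obj X))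
  naturality X Y f := by
    dsimp
    rw [← Adjunction.homEquiv_naturality_left_symm,
      ← Adjunction.homEquiv_naturality_right_symm]
    congr 1
    have h1 := adj₁.unit.naturality f
    have h2 := α.hom.naturality (L₁.map f)
    dsimp at h1 h2
    simp only [assoc]
    rw [reassoc_of% h1, h2]

lemma β_app (X : C) : (β adj₁ adj₂ t α).app X =
    (adj₂.homEquiv X (t.obj (L₁.obj X))).symm
      (adj₁.unit.app X ≫ α.hom.app (L₁.obj X)) := rfl

lemma homEquiv_β_app (X : C) :
    adj₂.homEquiv X (t.obj (L₁.obj X)) ((β adj₁ adj₂ t α).app X) =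
      adj₁.unit.app X ≫ α.hom.app (L₁.obj X) := by
  simp [β_app]

/-- Key exchange lemma. -/
lemma β_counit (d : D₁) :
    L₂.map (α.hom.app d) ≫ adj₂.counit.app (t.obj d) =
      (β adj₁ adj₂ t α).app (U₁.obj d) ≫ t.map (adj₁.counit.app d) := by
  have h2 := α.hom.naturality (adj₁.counit.app d)
  dsimp at h2
  erw [β_app, Adjunction.homEquiv_counit, assoc, ← Adjunction.counit_naturality,
    ← assoc, ← L₂.map_comp, assoc, ← h2, ← assoc, adj₁.right_triangle_components, id_comp]
  rfl

/-- The induced morphism of monads `T₂ ⟶ T₁`. -/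
def φ : (adj₂.toMonad : Monad C) ⟶ adj₁.toMonad where
  toNatTrans :=
  { app := fun X => U₂.map ((β adj₁ adj₂ t α).app X) ≫ α.inv.app (L₁.obj X)
    naturality := fun X Y f => by
      dsimp [Adjunction.toMonad]
      have h1 := (β adj₁ adj₂ t α).naturality f
      dsimp at h1
      have h2 := α.inv.naturality (L₁.map f)
      dsimp at h2
      rw [← assoc, ← U₂.map_comp, h1, U₂.map_comp, assoc, h2, assoc] }
  app_η X := by
    have h := homEquiv_β_app adj₁ adj₂ t α X
    rw [Adjunction.homEquiv_unit] at h
    dsimp [Adjunction.toMonad]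
    rw [← assoc, h, assoc, α.hom_inv_id_app]
    simp
  app_μ X := by
    dsimp [Adjunction.toMonad]
    have hβ := adj₂.counit.naturality ((β adj₁ adj₂ t α).app X)
    dsimp at hβ
    have hK := β_counit adj₁ adj₂ t α (L₁.obj X)
    have hα := α.hom.naturality (adj₁.counit.app (L₁.obj X))
    dsimp at hα
    rw [← cancel_mono (α.hom.app (L₁.obj X))]
    simp only [assoc, Iso.inv_hom_id_app, comp_id]
    rw [hα]
    simp only [Iso.inv_hom_id_app_assoc, comp_id]
    rw [← U₂.map_comp, ← hK, ← U₂.map_comp, ← L₂.map_comp_assoc]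
    simp only [Functor.comp_obj, assoc, Iso.inv_hom_id_app, comp_id]
    rw [hβ]
    simp [Functor.map_comp]

/-- The comparison square. -/
def S : Monad.comparison adj₁ ⋙ Monad.algebraFunctorOfMonadHom (φ adj₁ adj₂ t α) ≅
    t ⋙ Monad.comparison adj₂ :=
  NatIso.ofComponents
    (fun d => Monad.Algebra.isoMk (α.app d) (by
      have hK := β_counit adj₁ adj₂ t α d
      have hα := α.hom.naturality (adj₁.counit.app d)
      dsimp at hα ⊢
      dsimp [φ, Adjunction.toMonad, Monad.comparison, Monad.algebraFunctorOfMonadHom]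
      rw [← U₂.map_comp, hK, U₂.map_comp]
      simp only [assoc]
      rw [hα]
      simp only [Iso.inv_hom_id_app_assoc]))
    (fun f => by
      ext
      have := α.hom.naturality f
      dsimp at this ⊢
      exact this)

end Stmt6Aux

open Stmt6Aux in
theorem stmt_6 {C D₁ D₂ : Type*} [Category C] [Category D₁] [Category D₂]
    (U₁ : D₁ ⥤ C) (U₂ : D₂ ⥤ C) (L₁ : C ⥤ D₁) (L₂ : C ⥤ D₂)
    (adj₁ : L₁ ⊣ U₁) (adj₂ : L₂ ⊣ U₂)
    (h₁ : (Monad.comparison adj₁).IsEquivalence)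
    (h₂ : (Monad.comparison adj₂).IsEquivalence)
    (t : D₁ ⥤ D₂) (α : U₁ ≅ t ⋙ U₂) :
    t.IsEquivalence ↔
      ∀ X : C, IsIso ((adj₂.homEquiv X (t.obj (L₁.obj X))).symm
        (adj₁.unit.app X ≫ α.hom.app (L₁.obj X))) := by
  constructor
  · intro ht
    let adjE := t.asEquivalence.toAdjunction
    let ρ : t.asEquivalence.inverse ⋙ U₁ ≅ U₂ :=
      Functor.isoWhiskerLeft t.asEquivalence.inverse α ≪≫ (Functor.associator _ _ _).symm ≪≫
        Functor.isoWhiskerRight t.asEquivalence.counitIso U₂ ≪≫ U₂.leftUnitor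
    let A : L₁ ⋙ t.asEquivalence.functor ⊣ U₂ := (adj₁.comp adjE).ofNatIsoRight ρ
    have key : ∀ X : C, (β adj₁ adj₂ t α).app X =
        (Adjunction.leftAdjointUniq adj₂ A).hom.app X := by
      intro X
      apply (adj₂.homEquiv X ((L₁ ⋙ t.asEquivalence.functor).obj X)).injective
      have h2 : (adj₂.homEquiv X ((L₁ ⋙ t.asEquivalence.functor).obj X))
          ((β adj₁ adj₂ t α).app X) = adj₁.unit.app X ≫ α.hom.app (L₁.obj X) :=
        homEquiv_β_app adj₁ adj₂ t α X
      rw [h2, Adjunction.homEquiv_leftAdjointUniq_hom_app]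
      have hα := α.hom.naturality (t.asEquivalence.unit.app (L₁.obj X))
      dsimp at hα
      have htri : t.map (t.asEquivalence.unit.app (L₁.obj X)) ≫
          t.asEquivalence.counit.app (t.obj (L₁.obj X)) = 𝟙 _ :=
        t.asEquivalence.functor_unit_comp (L₁.obj X)
      simp only [A, ρ, adjE, Adjunction.ofNatIsoRight, Adjunction.mkOfHomEquiv_unit_app,
        Adjunction.equivHomsetRightOfNatIso, Equiv.trans_apply, Equiv.coe_fn_mk,
        Iso.trans_hom, Functor.isoWhiskerLeft_hom, Functor.isoWhiskerRight_hom, Iso.symm_hom,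
        NatTrans.comp_app, Functor.whiskerLeft_app, Functor.whiskerRight_app, Functor.associator_inv_app,
        Functor.leftUnitor_hom_app, comp_id, id_comp, assoc]
      rw [Adjunction.comp_unit_app]
      have hE : t.asEquivalence.toAdjunction.unit = t.asEquivalence.unit := rfl
      rw [hE]
      simp only [Functor.comp_map, Functor.map_id, comp_id, id_comp, assoc]
      simp [reassoc_of% hα, ← Functor.map_comp, htri, Iso.trans_hom, NatTrans.comp_app,
        Functor.isoWhiskerRight_hom, Functor.whiskerRight_app, Functor.leftUnitor_hom_app]
      change _ = adj₁.unit.app X ≫ α.hom.app (L₁.obj X) ≫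
        U₂.map (t.map (t.asEquivalence.unit.app (L₁.obj X))) ≫
          U₂.map (t.asEquivalence.counit.app (t.obj (L₁.obj X))) ≫ 𝟙 _
      erw [← U₂.map_comp_assoc, htri]
      simp
    intro X
    rw [← β_app adj₁ adj₂ t α X, key X]
    exact Iso.isIso_hom ((Adjunction.leftAdjointUniq adj₂ A).app X)
  · intro hβ
    haveI := h₁
    haveI := h₂
    have hb : ∀ X : C, IsIso ((β adj₁ adj₂ t α).app X) := fun X => hβ X
    haveI : ∀ X : C, IsIso (((monadToFunctor C).map (φ adj₁ adj₂ t α)).app X) := fun X => by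
      have := hb X
      dsimp [φ, monadToFunctor]
      exact IsIso.comp_isIso' (Functor.map_isIso U₂ _) (Iso.isIso_inv (α.app (L₁.obj X)))
    haveI : IsIso ((monadToFunctor C).map (φ adj₁ adj₂ t α)) :=
      NatIso.isIso_of_isIso_app _
    haveI : IsIso (φ adj₁ adj₂ t α) :=
      isIso_of_reflects_iso _ (monadToFunctor C)
    haveI : (Monad.algebraFunctorOfMonadHom (φ adj₁ adj₂ t α)).IsEquivalence :=
      inferInstanceAs
        ((Monad.algebraEquivOfIsoMonads (asIso (φ adj₁ adj₂ t α))).inverse.IsEquivalence)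
    let E₂ := (Monad.comparison adj₂).asEquivalence
    let iso : t ≅ (Monad.comparison adj₁ ⋙
        Monad.algebraFunctorOfMonadHom (φ adj₁ adj₂ t α)) ⋙ E₂.inverse :=
      t.rightUnitor.symm ≪≫ Functor.isoWhiskerLeft t E₂.unitIso ≪≫
        (Functor.associator _ _ _).symm ≪≫ Functor.isoWhiskerRight (S adj₁ adj₂ t α).symm E₂.inverse
    exact Functor.isEquivalence_of_iso iso.symm
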